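/- (Sectional robustness.) Let A be an m×n real matrix, K ⊆ {1,…,n}, and C > 1. Suppose that for every x' ∈ ℝⁿ and every w ∈ ℝⁿ with Aw = 0 one has ‖x'_K + w_K‖₁ + (1/C)·‖w_K̄‖₁ ≥ ‖x'_K‖₁. Then for every x ∈ ℝⁿ, every ℓ1 minimizer x̂ for (A, x) satisfies ‖x − x̂‖₁ ≤ (2(C+1)/(C−1))·‖x_K̄‖₁. -/
import Mathlib


/-- The ℓ1 norm of a vector in ℝⁿ. -/
noncomputable def l1 {n : ℕ} (x : Fin n → ℝ) : ℝ := ∑ i, |x i|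

/-- The restriction of a vector to the coordinates in `K` (zero outside `K`). -/
def restr {n : ℕ} (K : Finset (Fin n)) (x : Fin n → ℝ) : Fin n → ℝ :=
  fun i => if i ∈ K then x i else 0

lemma l1_split {n : ℕ} (K : Finset (Fin n)) (z : Fin n → ℝ) :
    l1 z = l1 (restr K z) + l1 (restr Kᶜ z) := by
  unfold l1 restr
  rw [← Finset.sum_add_distrib]
  apply Finset.sum_congr rfl
  intro i _
  by_cases h : i ∈ K <;> simp [h]

lemma restr_add {n : ℕ} (K : Finset (Fin n)) (a b : Fin n → ℝ) :
    restr K (a + b) = restr K a + restr K b := by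
  funext i
  simp only [restr, Pi.add_apply]
  split <;> simp

lemma l1_tri {n : ℕ} (a b : Fin n → ℝ) : l1 b - l1 a ≤ l1 (a + b) := by
  unfold l1
  rw [← Finset.sum_sub_distrib]
  apply Finset.sum_le_sum
  intro i _
  have : |b i| ≤ |a i + b i| + |a i| := by
    calc |b i| = |(a i + b i) - a i| := by ring_nf
    _ ≤ |a i + b i| + |a i| := abs_sub _ _
  simp only [Pi.add_apply]
  linarith

lemma l1_nonneg {n : ℕ} (a : Fin n → ℝ) : 0 ≤ l1 a :=
  Finset.sum_nonneg fun i _ => abs_nonneg _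

theorem stmt_5 {m n : ℕ} (A : Matrix (Fin m) (Fin n) ℝ)
    (K : Finset (Fin n)) (C : ℝ) (hC : 1 < C)
    (hcond : ∀ x' : Fin n → ℝ, ∀ w : Fin n → ℝ, A.mulVec w = 0 →
      l1 (restr K x' + restr K w) + (1 / C) * l1 (restr Kᶜ w) ≥ l1 (restr K x')) :
    ∀ x : Fin n → ℝ, ∀ xh : Fin n → ℝ, A.mulVec xh = A.mulVec x →
      (∀ z : Fin n → ℝ, A.mulVec z = A.mulVec x → l1 xh ≤ l1 z) →
      l1 (x - xh) ≤ (2 * (C + 1) / (C - 1)) * l1 (restr Kᶜ x) := by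
  intro x xh hA hmin
  set w : Fin n → ℝ := xh - x with hwdef
  have hw : A.mulVec w = 0 := by
    rw [hwdef, Matrix.mulVec_sub, hA, sub_self]
  have hxw : l1 (x - xh) = l1 w := by
    unfold l1
    apply Finset.sum_congr rfl
    intro i _
    rw [hwdef]
    simp [abs_sub_comm]
  rw [hxw]
  set a := l1 (restr K w) with ha
  set b := l1 (restr Kᶜ w) with hb
  set p := l1 (restr K x) with hp
  set q := l1 (restr Kᶜ x) with hq
  -- a ≤ (1/C) * b
  have h1 : a ≤ (1 / C) * b := by
    have := hcond (-w) w hw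
    have hz : restr K (-w) + restr K w = 0 := by
      funext i
      simp [restr]
      split <;> simp
    rw [hz] at this
    have hneg : l1 (restr K (-w)) = a := by
      unfold l1
      apply Finset.sum_congr rfl
      intro i _
      simp [restr]
      split <;> simp
    rw [hneg] at this
    have h0 : l1 (0 : Fin n → ℝ) = 0 := by simp [l1]
    rw [h0] at this
    linarith
  -- null space condition at x
  have h2 : p ≤ l1 (restr K x + restr K w) + (1 / C) * b := hcond x w hw
  -- minimality
  have h3 : l1 xh ≤ l1 x := hmin x rfl
  have hxh : xh = x + w := by rw [hwdef]; ring
  have hsplit1 : l1 xh = l1 (restr K x + restr K w) + l1 (restr Kᶜ x + restr Kᶜ w) := by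
    rw [hxh, l1_split K, restr_add, restr_add]
  have hsplit2 : l1 x = p + q := l1_split K x
  have h4 : b - q ≤ l1 (restr Kᶜ x + restr Kᶜ w) := l1_tri _ _
  have h5 : p - (1 / C) * b ≤ l1 (restr K x + restr K w) := by linarith
  -- combine: p - (1/C)b + b - q ≤ p + q
  have h6 : (1 - 1 / C) * b ≤ 2 * q := by nlinarith
  have hC0 : (0 : ℝ) < C := by linarith
  have hq0 : 0 ≤ q := l1_nonneg _
  have hb0 : 0 ≤ b := l1_nonneg _
  have hwsplit : l1 w = a + b := l1_split K w
  rw [hwsplit]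
  rw [div_mul_eq_mul_div, le_div_iff₀ (by linarith : (0:ℝ) < C - 1)]
  have hinv : C * (1 / C) = 1 := mul_one_div_cancel (ne_of_gt hC0)
  have h6' : (C - 1) * b ≤ 2 * C * q := by
    have hmul := mul_le_mul_of_nonneg_left h6 (le_of_lt hC0)
    nlinarith [hmul, hinv]
  have hac : a * (C - 1) ≤ 2 * q := by
    have hmul := mul_le_mul_of_nonneg_left h6' (le_of_lt (by positivity : (0:ℝ) < 1 / C))
    have hmul2 := mul_le_mul_of_nonneg_right h1 (by linarith : (0:ℝ) ≤ C - 1)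
    nlinarith [hmul, hmul2, hinv]
  nlinarith [h6', hac]
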